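/- Given a continuous function N : [0,∞) → ℝ and λ > 0, let z : [0,∞) → ℝ be continuously differentiable with z'(t) = −λ² ∫₀ᵗ N(t−s) z(s) ds and z(0) = 1. Let g : [0,∞) → ℝ be continuous, f₁(t) = ∫₀ᵗ g(s) ds, and c ∈ ℝ. Define θ(t) = −(c/λ²) ( f₁(t) − ∫₀ᵗ g(s) z(t−s) ds ). Then θ(0) = 0 and θ'(t) = −λ² ∫₀ᵗ N(t−s) θ(s) ds − c ∫₀ᵗ N(t−s) f₁(s) ds for every t ≥ 0. (Explicit solution formula for the forced modal equation arising from the boundary input f(x̂,t) = f₀(x̂) f₁(t).) -/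

import Mathlib

open MeasureTheory Set

open intervalIntegral in
lemma triangle_swap (K : ℝ → ℝ → ℝ) (hK : Continuous fun p : ℝ × ℝ => K p.1 p.2)
    {t : ℝ} (ht : 0 ≤ t) :
    (∫ τ in (0:ℝ)..t, ∫ s in (0:ℝ)..τ, K τ s) =
      ∫ s in (0:ℝ)..t, ∫ τ in s..t, K τ s := by
  obtain ⟨C, hC⟩ := (isCompact_Icc.prod isCompact_Icc :
      IsCompact (Icc (0:ℝ) t ×ˢ Icc (0:ℝ) t)).exists_bound_of_continuousOn hK.continuousOn
  set μ := volume.restrict (Ioc (0:ℝ) t) with hμ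
  haveI : IsFiniteMeasure μ :=
    ⟨by rw [hμ, Measure.restrict_apply_univ]; exact measure_Ioc_lt_top⟩
  set F : ℝ × ℝ → ℝ := fun p => Set.indicator {q : ℝ × ℝ | q.2 ≤ q.1} (fun q => K q.1 q.2) p
    with hFdef
  have hmeasS : MeasurableSet {q : ℝ × ℝ | q.2 ≤ q.1} :=
    measurableSet_le measurable_snd measurable_fst
  have hFmeas : AEStronglyMeasurable F (μ.prod μ) :=
    (hK.measurable.indicator hmeasS).aestronglyMeasurable
  have hFint : Integrable F (μ.prod μ) := by
    refine (integrable_const C).mono' hFmeas ?_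
    rw [hμ, Measure.prod_restrict]
    refine (ae_restrict_iff' (measurableSet_Ioc.prod measurableSet_Ioc)).2 (ae_of_all _ ?_)
    intro p hp
    refine le_trans (norm_indicator_le_norm_self _ _) ?_
    exact hC p ⟨Ioc_subset_Icc_self hp.1, Ioc_subset_Icc_self hp.2⟩
  have lhs_eq : (∫ τ in (0:ℝ)..t, ∫ s in (0:ℝ)..τ, K τ s)
      = ∫ τ, (∫ s, F (τ, s) ∂μ) ∂μ := by
    rw [integral_of_le ht]
    refine setIntegral_congr_fun measurableSet_Ioc fun τ hτ => ?_
    have h1 : (fun s => F (τ, s)) = Set.indicator (Iic τ) (fun s => K τ s) := by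
      funext s
      simp [hFdef, Set.indicator, Set.mem_Iic, Set.mem_setOf_eq]
    rw [h1, MeasureTheory.integral_indicator measurableSet_Iic, hμ,
      Measure.restrict_restrict measurableSet_Iic]
    have h2 : Iic τ ∩ Ioc 0 t = Ioc 0 τ := by
      ext x
      simp only [mem_inter_iff, mem_Iic, mem_Ioc]
      constructor
      · rintro ⟨hx1, hx2, _⟩; exact ⟨hx2, hx1⟩
      · rintro ⟨hx1, hx2⟩; exact ⟨hx2, hx1, hx2.trans hτ.2⟩
    rw [h2, integral_of_le hτ.1.le]
  have rhs_eq : (∫ s in (0:ℝ)..t, ∫ τ in s..t, K τ s)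
      = ∫ s, (∫ τ, F (τ, s) ∂μ) ∂μ := by
    rw [integral_of_le ht]
    refine setIntegral_congr_fun measurableSet_Ioc fun s hs => ?_
    have h1 : (fun τ => F (τ, s)) = Set.indicator (Ici s) (fun τ => K τ s) := by
      funext τ
      simp [hFdef, Set.indicator, Set.mem_Ici, Set.mem_setOf_eq]
    rw [h1, MeasureTheory.integral_indicator measurableSet_Ici, hμ,
      Measure.restrict_restrict measurableSet_Ici]
    have h2 : Ici s ∩ Ioc 0 t = Icc s t := by
      ext x
      simp only [mem_inter_iff, mem_Ici, mem_Ioc, mem_Icc]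
      constructor
      · rintro ⟨hx1, _, hx3⟩; exact ⟨hx1, hx3⟩
      · rintro ⟨hx1, hx2⟩; exact ⟨hx1, hs.1.trans_le hx1, hx2⟩
    rw [h2, integral_of_le hs.2, ← integral_Icc_eq_integral_Ioc]
  rw [lhs_eq, rhs_eq]
  exact MeasureTheory.integral_integral_swap hFint

theorem forced_modal_equation_solution
    (N : ℝ → ℝ) (hN : ContinuousOn N (Set.Ici 0))
    (lam : ℝ) (hlam : 0 < lam)
    (z z' : ℝ → ℝ) (hz'c : ContinuousOn z' (Set.Ici 0))
    (hz : ∀ s ∈ Set.Ici (0:ℝ), HasDerivWithinAt z (z' s) (Set.Ici 0) s)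
    (hzeq : ∀ t ∈ Set.Ici (0:ℝ),
      z' t = -lam ^ 2 * ∫ s in (0:ℝ)..t, N (t - s) * z s)
    (hz0 : z 0 = 1)
    (g : ℝ → ℝ) (hg : ContinuousOn g (Set.Ici 0))
    (f₁ : ℝ → ℝ) (hf₁ : ∀ t, f₁ t = ∫ s in (0:ℝ)..t, g s)
    (c : ℝ)
    (θ : ℝ → ℝ)
    (hθ : ∀ t, θ t = -(c / lam ^ 2) * (f₁ t - ∫ s in (0:ℝ)..t, g s * z (t - s))) :
    θ 0 = 0 ∧
      ∀ t ∈ Set.Ici (0:ℝ),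
        HasDerivWithinAt θ
          (-lam ^ 2 * (∫ s in (0:ℝ)..t, N (t - s) * θ s)
            - c * ∫ s in (0:ℝ)..t, N (t - s) * f₁ s)
          (Set.Ici 0) t := by
  have hlam2 : lam ^ 2 ≠ 0 := by positivity
  constructor
  · rw [hθ 0, hf₁ 0]; simp
  -- continuous extensions to all of ℝ
  have hmc : Continuous fun x : ℝ => max x 0 := continuous_id.max continuous_const
  have hmm : ∀ x : ℝ, max x 0 ∈ Ici (0:ℝ) := fun x => le_max_right x 0
  have hme : ∀ x : ℝ, 0 ≤ x → max x 0 = x := fun x hx => max_eq_left hx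
  set G : ℝ → ℝ := fun x => g (max x 0) with hGdef
  set Z : ℝ → ℝ := fun x => z (max x 0) with hZdef
  set Nc : ℝ → ℝ := fun x => N (max x 0) with hNcdef
  set Z' : ℝ → ℝ := fun x => z' (max x 0) with hZ'def
  have hzc : ContinuousOn z (Ici 0) := fun s hs => (hz s hs).continuousWithinAt
  have hGc : Continuous G := hg.comp_continuous hmc hmm
  have hZc : Continuous Z := hzc.comp_continuous hmc hmm
  have hNcc : Continuous Nc := hN.comp_continuous hmc hmm
  have hZ'c : Continuous Z' := hz'c.comp_continuous hmc hmm
  have hGe : ∀ x, 0 ≤ x → G x = g x := fun x hx => congrArg g (hme x hx)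
  have hZe : ∀ x, 0 ≤ x → Z x = z x := fun x hx => congrArg z (hme x hx)
  have hNe : ∀ x, 0 ≤ x → Nc x = N x := fun x hx => congrArg N (hme x hx)
  have hZ'e : ∀ x, 0 ≤ x → Z' x = z' x := fun x hx => congrArg z' (hme x hx)
  -- auxiliary functions
  set F₁ : ℝ → ℝ := fun x => ∫ s in (0:ℝ)..x, G s with hF₁def
  set W : ℝ → ℝ := fun x => ∫ s in (0:ℝ)..x, G s * Z (x - s) with hWdef
  set M : ℝ → ℝ := fun x => ∫ s in (0:ℝ)..x, Nc s with hMdef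
  have hF₁c : Continuous F₁ := by
    refine intervalIntegral.continuous_parametric_intervalIntegral_of_continuous
      (f := fun (x : ℝ) s => G s) ?_ continuous_id
    exact hGc.comp continuous_snd
  have hWc : Continuous W := by
    refine intervalIntegral.continuous_parametric_intervalIntegral_of_continuous
      (f := fun (x : ℝ) s => G s * Z (x - s)) ?_ continuous_id
    exact (hGc.comp continuous_snd).mul (hZc.comp (continuous_fst.sub continuous_snd))
  have hMc : Continuous M := by
    refine intervalIntegral.continuous_parametric_intervalIntegral_of_continuous
      (f := fun (x : ℝ) s => Nc s) ?_ continuous_id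
    exact hNcc.comp continuous_snd
  set H : ℝ → ℝ := fun x => ∫ s in (0:ℝ)..x, Nc (x - s) * W s with hHdef
  have hHc : Continuous H := by
    refine intervalIntegral.continuous_parametric_intervalIntegral_of_continuous
      (f := fun (x : ℝ) s => Nc (x - s) * W s) ?_ continuous_id
    exact (hNcc.comp (continuous_fst.sub continuous_snd)).mul (hWc.comp continuous_snd)
  -- basic identifications on [0, ∞)
  have hWeq : ∀ x, 0 ≤ x → (∫ s in (0:ℝ)..x, g s * z (x - s)) = W x := by
    intro x hx
    refine intervalIntegral.integral_congr fun s hs => ?_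
    rw [uIcc_of_le hx] at hs
    rw [← hGe s hs.1, ← hZe (x - s) (by linarith [hs.2])]
  have hF₁eq : ∀ x, 0 ≤ x → f₁ x = F₁ x := by
    intro x hx
    rw [hf₁ x]
    refine intervalIntegral.integral_congr fun s hs => ?_
    rw [uIcc_of_le hx] at hs
    exact (hGe s hs.1).symm
  have hθeq : ∀ x, 0 ≤ x → θ x = c / lam ^ 2 * (W x - F₁ x) := by
    intro x hx
    rw [hθ x, hWeq x hx, hF₁eq x hx]; ring
  -- primitive formula for Z
  have hZprim : ∀ x, 0 ≤ x → Z x - 1 = ∫ r in (0:ℝ)..x, Z' r := by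
    intro x hx
    have h1 : (∫ r in (0:ℝ)..x, z' r) = z x - z 0 := by
      refine intervalIntegral.integral_eq_sub_of_hasDeriv_right_of_le hx
        (hzc.mono (Icc_subset_Ici_self)) (fun r hr => ?_) ?_
      · exact (hz r hr.1.le).mono fun y hy => hr.1.le.trans (le_of_lt hy)
      · exact ((hz'c.mono ((uIcc_of_le hx).le.trans Icc_subset_Ici_self)).intervalIntegrable)
    have h2 : (∫ r in (0:ℝ)..x, Z' r) = ∫ r in (0:ℝ)..x, z' r := by
      refine intervalIntegral.integral_congr fun r hr => ?_
      rw [uIcc_of_le hx] at hr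
      exact hZ'e r hr.1
    rw [h2, h1, hz0, hZe x hx]
  -- the Volterra equation for Z'
  have hZ'eq : ∀ r, 0 ≤ r → Z' r = -lam ^ 2 * ∫ σ in (0:ℝ)..r, Nc (r - σ) * Z σ := by
    intro r hr
    rw [hZ'e r hr, hzeq r hr]
    congr 1
    refine intervalIntegral.integral_congr fun σ hσ => ?_
    rw [uIcc_of_le hr] at hσ
    rw [← hNe (r - σ) (by linarith [hσ.2]), ← hZe σ hσ.1]
  -- ∫ r in a..b, Nc (r - a) = M (b - a)
  have hMint : ∀ a b : ℝ, (∫ r in a..b, Nc (r - a)) = M (b - a) := by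
    intro a b
    have := intervalIntegral.integral_comp_sub_right (a := a) (b := b) (fun u => Nc u) a
    simp only [sub_self] at this
    rw [this, hMdef]
  -- key identity 1 : Z x - 1 = -lam² ∫₀ˣ Z σ * M (x - σ)
  have key1 : ∀ x, 0 ≤ x → Z x - 1 = -lam ^ 2 * ∫ σ in (0:ℝ)..x, Z σ * M (x - σ) := by
    intro x hx
    rw [hZprim x hx]
    have e1 : (∫ r in (0:ℝ)..x, Z' r)
        = ∫ r in (0:ℝ)..x, -lam ^ 2 * ∫ σ in (0:ℝ)..r, Nc (r - σ) * Z σ := by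
      refine intervalIntegral.integral_congr fun r hr => ?_
      rw [uIcc_of_le hx] at hr
      exact hZ'eq r hr.1
    rw [e1, intervalIntegral.integral_const_mul,
      triangle_swap (fun r σ => Nc (r - σ) * Z σ)
        ((hNcc.comp (continuous_fst.sub continuous_snd)).mul (hZc.comp continuous_snd)) hx]
    congr 1
    refine intervalIntegral.integral_congr fun σ _ => ?_
    show (∫ τ in σ..x, Nc (τ - σ) * Z σ) = Z σ * M (x - σ)
    rw [intervalIntegral.integral_mul_const, hMint σ x, mul_comm]
  -- key identity 2 : W x - F₁ x = -lam² ∫₀ˣ H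
  have key2 : ∀ x, 0 ≤ x → W x - F₁ x = -lam ^ 2 * ∫ τ in (0:ℝ)..x, H τ := by
    intro x hx
    have swap1 : (∫ τ in (0:ℝ)..x, H τ)
        = ∫ s in (0:ℝ)..x, ∫ τ in s..x, Nc (τ - s) * W s :=
      triangle_swap (fun τ s => Nc (τ - s) * W s)
        ((hNcc.comp (continuous_fst.sub continuous_snd)).mul (hWc.comp continuous_snd)) hx
    have step2 : (∫ s in (0:ℝ)..x, ∫ τ in s..x, Nc (τ - s) * W s)
        = ∫ s in (0:ℝ)..x, ∫ σ in (0:ℝ)..s, G σ * Z (s - σ) * M (x - s) := by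
      refine intervalIntegral.integral_congr fun s _ => ?_
      show (∫ τ in s..x, Nc (τ - s) * W s) = ∫ σ in (0:ℝ)..s, G σ * Z (s - σ) * M (x - s)
      rw [intervalIntegral.integral_mul_const, hMint s x,
        intervalIntegral.integral_mul_const, mul_comm]
    have swap2 : (∫ s in (0:ℝ)..x, ∫ σ in (0:ℝ)..s, G σ * Z (s - σ) * M (x - s))
        = ∫ σ in (0:ℝ)..x, ∫ s in σ..x, G σ * Z (s - σ) * M (x - s) :=
      triangle_swap (fun s σ => G σ * Z (s - σ) * M (x - s))
        (((hGc.comp continuous_snd).mul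
          (hZc.comp (continuous_fst.sub continuous_snd))).mul
          (hMc.comp (continuous_const.sub continuous_fst))) hx
    have e3 : ∀ σ : ℝ, (∫ s in σ..x, Z (s - σ) * M (x - s))
        = ∫ u in (0:ℝ)..(x - σ), Z u * M ((x - σ) - u) := by
      intro σ
      have h := intervalIntegral.integral_comp_sub_right (a := σ) (b := x)
        (fun u => Z u * M ((x - σ) - u)) σ
      simp only [sub_self] at h
      rw [← h]
      refine intervalIntegral.integral_congr fun s _ => ?_
      simp only [sub_sub_sub_cancel_right]
    have main : -lam ^ 2 * (∫ τ in (0:ℝ)..x, H τ)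
        = ∫ σ in (0:ℝ)..x, G σ * (Z (x - σ) - 1) := by
      rw [swap1, step2, swap2, ← intervalIntegral.integral_const_mul]
      refine intervalIntegral.integral_congr fun σ hσ => ?_
      rw [uIcc_of_le hx] at hσ
      have hσx : 0 ≤ x - σ := by linarith [hσ.2]
      show -lam ^ 2 * (∫ s in σ..x, G σ * Z (s - σ) * M (x - s)) = G σ * (Z (x - σ) - 1)
      rw [show (fun s => G σ * Z (s - σ) * M (x - s)) = fun s => G σ * (Z (s - σ) * M (x - s))
          from funext fun s => by ring]
      rw [intervalIntegral.integral_const_mul, e3 σ, key1 (x - σ) hσx]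
      ring
    have split : (∫ σ in (0:ℝ)..x, G σ * (Z (x - σ) - 1)) = W x - F₁ x := by
      rw [show (fun σ => G σ * (Z (x - σ) - 1)) = fun σ => G σ * Z (x - σ) - G σ
          from funext fun σ => by ring]
      have i1 : IntervalIntegrable (fun σ => G σ * Z (x - σ)) volume 0 x := by
        apply Continuous.intervalIntegrable
        exact hGc.mul (hZc.comp (continuous_const.sub continuous_id))
      rw [intervalIntegral.integral_sub i1 (hGc.intervalIntegrable 0 x)]
    rw [main, split]
  -- θ as a primitive
  have hθprim : ∀ x, 0 ≤ x → θ x = ∫ τ in (0:ℝ)..x, -c * H τ := by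
    intro x hx
    rw [hθeq x hx, key2 x hx, intervalIntegral.integral_const_mul]
    field_simp
  intro t ht
  have hcHc : Continuous fun τ => -c * H τ := continuous_const.mul hHc
  have hu : HasDerivAt (fun x => ∫ τ in (0:ℝ)..x, -c * H τ) (-c * H t) t :=
    intervalIntegral.integral_hasDerivAt_right (hcHc.intervalIntegrable 0 t)
      (hcHc.stronglyMeasurableAtFilter _ _) hcHc.continuousAt
  have hθt : HasDerivWithinAt θ (-c * H t) (Ici 0) t :=
    (hu.hasDerivWithinAt).congr (fun y hy => hθprim y hy) (hθprim t ht)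
  have hval : -lam ^ 2 * (∫ s in (0:ℝ)..t, N (t - s) * θ s)
      - c * (∫ s in (0:ℝ)..t, N (t - s) * f₁ s) = -c * H t := by
    have h1 : (∫ s in (0:ℝ)..t, N (t - s) * θ s)
        = ∫ s in (0:ℝ)..t, c / lam ^ 2 * (Nc (t - s) * W s - Nc (t - s) * F₁ s) := by
      refine intervalIntegral.integral_congr fun s hs => ?_
      rw [uIcc_of_le ht] at hs
      rw [← hNe (t - s) (by linarith [hs.2]), hθeq s hs.1]
      ring
    have h2 : (∫ s in (0:ℝ)..t, N (t - s) * f₁ s)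
        = ∫ s in (0:ℝ)..t, Nc (t - s) * F₁ s := by
      refine intervalIntegral.integral_congr fun s hs => ?_
      rw [uIcc_of_le ht] at hs
      rw [← hNe (t - s) (by linarith [hs.2]), hF₁eq s hs.1]
    have i1 : IntervalIntegrable (fun s => Nc (t - s) * W s) volume 0 t := by
      apply Continuous.intervalIntegrable
      exact (hNcc.comp (continuous_const.sub continuous_id)).mul hWc
    have i2 : IntervalIntegrable (fun s => Nc (t - s) * F₁ s) volume 0 t := by
      apply Continuous.intervalIntegrable
      exact (hNcc.comp (continuous_const.sub continuous_id)).mul hF₁c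
    rw [h1, h2, intervalIntegral.integral_const_mul, intervalIntegral.integral_sub i1 i2]
    have hHt : H t = ∫ s in (0:ℝ)..t, Nc (t - s) * W s := rfl
    rw [hHt]
    field_simp
    ring
  rw [hval]
  exact hθt
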